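/- Let a ∈ ℝ and let y : J → ℝ be a differentiable function on an open interval J such that x² + x³ + x²·y(x) + 2ax·y(x)² + 2ax·y(x)³ + a²·y(x)⁴ = 0 for all x ∈ J, with x² + 4ax·y(x) + 6ax·y(x)² + 4a²·y(x)³ ≠ 0 on J. Then y'(x) = −(2x + 3x² + 2x·y(x) + 2a·y(x)² + 2a·y(x)³)/(x² + 4ax·y(x) + 6ax·y(x)² + 4a²·y(x)³) for all x ∈ J; moreover, at every point of J where 5x + 6x² + 4(1+a)x·y(x) + a·y(x)² ≠ 0, this equals (x + 2y(x) + 4x·y(x) + (2+3a)·y(x)²)/(5x + 6x² + 4(1+a)x·y(x) + a·y(x)²), i.e., the function y defined implicitly by the quartic relation satisfies the first-order equation dy/dx = Q/P of system (37). -/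

import Mathlib

/-- A differentiable function `y` lying on the invariant quartic
curve `x² + x³ + x²y + 2axy² + 2axy³ + a²y⁴ = 0` of system (37), with
`x² + 4axy + 6axy² + 4a²y³ ≠ 0`, satisfies
`y' = −(2x + 3x² + 2xy + 2ay² + 2ay³)/(x² + 4axy + 6axy² + 4a²y³)`; moreover,
wherever `5x + 6x² + 4(1+a)xy + ay² ≠ 0` this value coincides with
`(x + 2y + 4xy + (2+3a)y²)/(5x + 6x² + 4(1+a)xy + ay²)`, i.e. the implicitly
defined function satisfies `dy/dx = Q/P` for system (37). -/
theorem stmt_17 (a : ℝ)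
    (J : Set ℝ) (hJ : IsOpen J) (hJconn : IsPreconnected J)
    (y : ℝ → ℝ)
    (hdiff : ∀ x ∈ J, DifferentiableAt ℝ y x)
    (hcurve : ∀ x ∈ J, x ^ 2 + x ^ 3 + x ^ 2 * y x + 2 * a * x * (y x) ^ 2
      + 2 * a * x * (y x) ^ 3 + a ^ 2 * (y x) ^ 4 = 0)
    (hden : ∀ x ∈ J, x ^ 2 + 4 * a * x * y x + 6 * a * x * (y x) ^ 2
      + 4 * a ^ 2 * (y x) ^ 3 ≠ 0) :
    ∀ x ∈ J,
      HasDerivAt y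
        (-(2 * x + 3 * x ^ 2 + 2 * x * y x + 2 * a * (y x) ^ 2 + 2 * a * (y x) ^ 3)
          / (x ^ 2 + 4 * a * x * y x + 6 * a * x * (y x) ^ 2
              + 4 * a ^ 2 * (y x) ^ 3)) x ∧
      (5 * x + 6 * x ^ 2 + 4 * (1 + a) * x * y x + a * (y x) ^ 2 ≠ 0 →
        -(2 * x + 3 * x ^ 2 + 2 * x * y x + 2 * a * (y x) ^ 2 + 2 * a * (y x) ^ 3)
            / (x ^ 2 + 4 * a * x * y x + 6 * a * x * (y x) ^ 2
                + 4 * a ^ 2 * (y x) ^ 3)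
          = (x + 2 * y x + 4 * x * y x + (2 + 3 * a) * (y x) ^ 2)
            / (5 * x + 6 * x ^ 2 + 4 * (1 + a) * x * y x + a * (y x) ^ 2)) := by

  intro x hx
  have hy : HasDerivAt y (deriv y x) x := (hdiff x hx).hasDerivAt
  set d := deriv y x with hd
  -- g x = F(x, y x)
  have hg : HasDerivAt (fun t => t ^ 2 + t ^ 3 + t ^ 2 * y t + 2 * a * t * (y t) ^ 2
      + 2 * a * t * (y t) ^ 3 + a ^ 2 * (y t) ^ 4)
      ((2 * x + 3 * x ^ 2 + 2 * x * y x + 2 * a * (y x) ^ 2 + 2 * a * (y x) ^ 3)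
        + (x ^ 2 + 4 * a * x * y x + 6 * a * x * (y x) ^ 2 + 4 * a ^ 2 * (y x) ^ 3) * d) x := by
    have h1 : HasDerivAt (fun t : ℝ => t) 1 x := hasDerivAt_id x
    have := (((((h1.pow 2).add (h1.pow 3)).add ((h1.pow 2).mul hy)).add
        (((hasDerivAt_const x (2*a)).mul h1).mul (hy.pow 2))).add
        (((hasDerivAt_const x (2*a)).mul h1).mul (hy.pow 3))).add
        ((hasDerivAt_const x (a^2)).mul (hy.pow 4))
    refine this.congr_deriv ?_
    simp only [Pi.pow_apply, Pi.mul_apply]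
    ring
  have hg0 : HasDerivAt (fun t => t ^ 2 + t ^ 3 + t ^ 2 * y t + 2 * a * t * (y t) ^ 2
      + 2 * a * t * (y t) ^ 3 + a ^ 2 * (y t) ^ 4) 0 x := by
    have heq : (fun t => t ^ 2 + t ^ 3 + t ^ 2 * y t + 2 * a * t * (y t) ^ 2
        + 2 * a * t * (y t) ^ 3 + a ^ 2 * (y t) ^ 4) =ᶠ[nhds x] fun _ => (0 : ℝ) := by
      filter_upwards [hJ.mem_nhds hx] with t ht using hcurve t ht
    exact (hasDerivAt_const x (0:ℝ)).congr_of_eventuallyEq heq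
  have hsum : (2 * x + 3 * x ^ 2 + 2 * x * y x + 2 * a * (y x) ^ 2 + 2 * a * (y x) ^ 3)
      + (x ^ 2 + 4 * a * x * y x + 6 * a * x * (y x) ^ 2 + 4 * a ^ 2 * (y x) ^ 3) * d = 0 :=
    hg.unique hg0
  have hFy := hden x hx
  have hdval : d = -(2 * x + 3 * x ^ 2 + 2 * x * y x + 2 * a * (y x) ^ 2 + 2 * a * (y x) ^ 3)
      / (x ^ 2 + 4 * a * x * y x + 6 * a * x * (y x) ^ 2 + 4 * a ^ 2 * (y x) ^ 3) := by
    rw [eq_div_iff hFy]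
    linear_combination hsum
  refine ⟨hdval ▸ hy, fun hP => ?_⟩
  rw [div_eq_div_iff hFy hP]
  have hc := hcurve x hx
  linear_combination (-(10 : ℝ) - 18 * x - 10 * y x - 12 * a * y x) * hc
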